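/- Let G be a simple 1-dof Henneberg-I graph with base non-edge f = (v1, v2), in which u1 and u2 are the only vertices constructed directly on the base pair (v1, v2), and v1 has degree 2. Then G \ {v1} is a simple 1-dof Henneberg-I graph with base non-edge (u1, u2). -/

import Mathlib

open SimpleGraph

variable {α : Type*} [DecidableEq α]

/-- Validity of a Henneberg-I construction sequence (list of steps `(v, u, w)` meaning
`v ◁ (u, w)`) starting from the vertex set `S`. -/
def ValidFrom (S : Finset α) : List (α × α × α) → Prop
  | [] => True
  | (v, u, w) :: rest => v ∉ S ∧ u ∈ S ∧ w ∈ S ∧ u ≠ w ∧ ValidFrom (insert v S) rest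

/-- The vertex set built by a Henneberg-I construction from base edge `(a, b)`. -/
def buildVerts (a b : α) (l : List (α × α × α)) : Finset α :=
  l.foldl (fun s p => insert p.1 s) {a, b}

/-- The edge set built by a Henneberg-I construction from base edge `(a, b)`. -/
def buildEdges (a b : α) (l : List (α × α × α)) : Finset (Sym2 α) :=
  l.foldl (fun s p => insert s(p.1, p.2.1) (insert s(p.1, p.2.2) s)) {s(a, b)}

/-- `(V, E)` is a Henneberg-I graph with base edge `(a, b)`. -/
def IsHennebergI (V : Finset α) (E : Finset (Sym2 α)) (a b : α) : Prop :=
  a ≠ b ∧ ∃ l, ValidFrom {a, b} l ∧ V = buildVerts a b l ∧ E = buildEdges a b l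

/-- `(V, E)` is a simple 1-dof Henneberg-I graph with base non-edge `(a, b)`:
adding back the base edge `(a, b)` gives a Henneberg-I graph with base edge `(a, b)`. -/
def IsSimple1Dof (V : Finset α) (E : Finset (Sym2 α)) (a b : α) : Prop :=
  s(a, b) ∉ E ∧ IsHennebergI V (insert s(a, b) E) a b

/-- `(V', E')` is a subgraph of `(V, E)`. -/
def IsSubgraphOf (V : Finset α) (E : Finset (Sym2 α)) (V' : Finset α)
    (E' : Finset (Sym2 α)) : Prop :=
  V' ⊆ V ∧ E' ⊆ E ∧ ∀ e ∈ E', ∀ v ∈ e, v ∈ V'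

/-- `(V, E)` is wellconstrained (Laman): `|E| = 2|V| - 3` and every subgraph on `m`
vertices has at most `2m - 3` edges. -/
def IsLaman (V : Finset α) (E : Finset (Sym2 α)) : Prop :=
  E.card + 3 = 2 * V.card ∧
  ∀ V' E', IsSubgraphOf V E V' E' → E'.card ≤ 2 * V'.card - 3

/-- The degree of the vertex `x` in the edge set `E`. -/
def degreeIn (E : Finset (Sym2 α)) (x : α) : ℕ := (E.filter (fun e => x ∈ e)).card

/-- A step `p = (v, u, w)` is constructed directly on the base pair `(a, b)`. -/
def OnBase (a b : α) (p : α × α × α) : Prop :=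
  (p.2.1 = a ∧ p.2.2 = b) ∨ (p.2.1 = b ∧ p.2.2 = a)

/-- The 1-path property: exactly one vertex other than `a` and `b` has degree 2. -/
def OnePath (V : Finset α) (E : Finset (Sym2 α)) (a b : α) : Prop :=
  ∃! x, x ∈ V ∧ x ≠ a ∧ x ≠ b ∧ degreeIn E x = 2

/-- Triangle-decomposability of a graph `(V, E)`. -/
inductive TriDecomp : Finset α → Finset (Sym2 α) → Prop
  | edge (u v : α) (h : u ≠ v) : TriDecomp {u, v} {s(u, v)}
  | triangle (u v w : α) (huv : u ≠ v) (hvw : v ≠ w) (huw : u ≠ w) :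
      TriDecomp {u, v, w} {s(u, v), s(v, w), s(u, w)}
  | merge (V1 V2 V3 : Finset α) (E1 E2 E3 : Finset (Sym2 α)) (v1 v2 v3 : α)
      (h12 : v1 ≠ v2) (h23 : v2 ≠ v3) (h13 : v1 ≠ v3)
      (t1 : TriDecomp V1 E1) (t2 : TriDecomp V2 E2) (t3 : TriDecomp V3 E3)
      (i12 : V1 ∩ V2 = {v3}) (i23 : V2 ∩ V3 = {v1}) (i13 : V1 ∩ V3 = {v2})
      (e12 : E1 ∩ E2 = ∅) (e23 : E2 ∩ E3 = ∅) (e13 : E1 ∩ E3 = ∅) :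
      TriDecomp (V1 ∪ V2 ∪ V3) (E1 ∪ E2 ∪ E3)

/-- `H` is a minor of `G`: branch-set definition. -/
def HasMinor {V W : Type*} (G : SimpleGraph V) (H : SimpleGraph W) : Prop :=
  ∃ f : W → Set V,
    (∀ w, (f w).Nonempty) ∧
    (∀ w, (G.induce (f w)).Connected) ∧
    (∀ w w', w ≠ w' → Disjoint (f w) (f w')) ∧
    ∀ w w', H.Adj w w' → ∃ x ∈ f w, ∃ y ∈ f w', G.Adj x y



section Helpers

lemma validFrom_cons (S : Finset α) (p : α × α × α) (rest : List (α × α × α)) :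
    ValidFrom S (p :: rest) ↔
      p.1 ∉ S ∧ p.2.1 ∈ S ∧ p.2.2 ∈ S ∧ p.2.1 ≠ p.2.2 ∧ ValidFrom (insert p.1 S) rest := by
  obtain ⟨v, u, w⟩ := p
  exact Iff.rfl

lemma mem_vfold (l : List (α × α × α)) : ∀ (S : Finset α) (x : α),
    x ∈ l.foldl (fun s p => insert p.1 s) S ↔ x ∈ S ∨ ∃ p ∈ l, p.1 = x := by
  induction l with
  | nil => simp
  | cons p rest ih =>
    intro S x
    simp only [List.foldl_cons, ih, Finset.mem_insert, List.mem_cons]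
    constructor
    · rintro (((h | h) | ⟨q, hq, hq1⟩))
      · exact Or.inr ⟨p, Or.inl rfl, h.symm⟩
      · exact Or.inl h
      · exact Or.inr ⟨q, Or.inr hq, hq1⟩
    · rintro (h | ⟨q, (rfl | hq), hq1⟩)
      · exact Or.inl (Or.inr h)
      · exact Or.inl (Or.inl hq1.symm)
      · exact Or.inr ⟨q, hq, hq1⟩

lemma mem_buildVerts (a b : α) (l : List (α × α × α)) (x : α) :
    x ∈ buildVerts a b l ↔ x = a ∨ x = b ∨ ∃ p ∈ l, p.1 = x := by
  rw [buildVerts, mem_vfold]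
  simp [or_assoc]

lemma mem_efold (l : List (α × α × α)) : ∀ (T : Finset (Sym2 α)) (e : Sym2 α),
    e ∈ l.foldl (fun s p => insert s(p.1, p.2.1) (insert s(p.1, p.2.2) s)) T ↔
      e ∈ T ∨ ∃ p ∈ l, e = s(p.1, p.2.1) ∨ e = s(p.1, p.2.2) := by
  induction l with
  | nil => simp
  | cons p rest ih =>
    intro T e
    simp only [List.foldl_cons, ih, Finset.mem_insert, List.mem_cons]
    constructor
    · rintro ((h | h | h) | ⟨q, hq, hq1⟩)
      · exact Or.inr ⟨p, Or.inl rfl, Or.inl h⟩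
      · exact Or.inr ⟨p, Or.inl rfl, Or.inr h⟩
      · exact Or.inl h
      · exact Or.inr ⟨q, Or.inr hq, hq1⟩
    · rintro (h | ⟨q, (rfl | hq), hq1⟩)
      · exact Or.inl (Or.inr (Or.inr h))
      · rcases hq1 with h | h
        · exact Or.inl (Or.inl h)
        · exact Or.inl (Or.inr (Or.inl h))
      · exact Or.inr ⟨q, hq, hq1⟩

lemma mem_buildEdges (a b : α) (l : List (α × α × α)) (e : Sym2 α) :
    e ∈ buildEdges a b l ↔ e = s(a, b) ∨ ∃ p ∈ l, e = s(p.1, p.2.1) ∨ e = s(p.1, p.2.2) := by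
  rw [buildEdges, mem_efold]
  simp

lemma valid_notMem : ∀ (l : List (α × α × α)) (S : Finset α), ValidFrom S l →
    ∀ p ∈ l, p.1 ∉ S := by
  intro l
  induction l with
  | nil => simp
  | cons q rest ih =>
    intro S hval p hp
    rw [validFrom_cons] at hval
    rcases List.mem_cons.1 hp with rfl | hp
    · exact hval.1
    · intro hmem
      exact ih _ hval.2.2.2.2 p hp (Finset.mem_insert_of_mem hmem)

lemma valid_pairwise : ∀ (l : List (α × α × α)) (S : Finset α), ValidFrom S l →
    List.Pairwise (fun p q => p.1 ≠ q.1) l := by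
  intro l
  induction l with
  | nil => simp
  | cons q rest ih =>
    intro S hval
    rw [validFrom_cons] at hval
    refine List.Pairwise.cons ?_ (ih _ hval.2.2.2.2)
    intro p hp heq
    exact valid_notMem rest _ hval.2.2.2.2 p hp (heq ▸ Finset.mem_insert_self _ _)

lemma validA (v1 u1 u2 : α) : ∀ (l : List (α × α × α)) (S : Finset α),
    ValidFrom S l → v1 ∈ S →
    (∀ p ∈ l, (p.2.1 = v1 ∨ p.2.2 = v1) → p.1 = u1 ∨ p.1 = u2) →
    ValidFrom (insert u1 (insert u2 (S.erase v1)))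
      (l.filter (fun p => p.1 ≠ u1 ∧ p.1 ≠ u2)) := by
  intro l
  induction l with
  | nil => intro S _ _ _; simp [ValidFrom]
  | cons p rest ih =>
    intro S hval hv1 hcond
    rw [validFrom_cons] at hval
    obtain ⟨hv, hu, hw, huw, hrest⟩ := hval
    have hpne : p.1 ≠ v1 := fun h => hv (h ▸ hv1)
    by_cases h1 : p.1 = u1 ∨ p.1 = u2
    · rw [List.filter_cons_of_neg (by
        simp only [decide_eq_true_eq, not_and_or, not_not, ne_eq]
        tauto)]
      have := ih (insert p.1 S) hrest (Finset.mem_insert_of_mem hv1)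
        (fun q hq => hcond q (List.mem_cons_of_mem p hq))
      have hset : insert u1 (insert u2 ((insert p.1 S).erase v1)) =
          insert u1 (insert u2 (S.erase v1)) := by
        rw [Finset.erase_insert_of_ne hpne]
        ext x
        simp only [Finset.mem_insert]
        constructor
        · rintro (h | h | h | h) <;> try tauto
          rcases h1 with rfl | rfl <;> tauto
        · tauto
      rwa [hset] at this
    · push_neg at h1
      rw [List.filter_cons_of_pos (by simpa using h1)]
      rw [validFrom_cons]
      have hanch : ¬(p.2.1 = v1 ∨ p.2.2 = v1) := by
        intro h
        rcases hcond p List.mem_cons_self h with h' | h'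
        · exact h1.1 h'
        · exact h1.2 h'
      push_neg at hanch
      refine ⟨?_, ?_, ?_, huw, ?_⟩
      · simp only [Finset.mem_insert, Finset.mem_erase]
        rintro (h | h | ⟨_, h⟩)
        · exact h1.1 h
        · exact h1.2 h
        · exact hv h
      · exact Finset.mem_insert_of_mem (Finset.mem_insert_of_mem
          (Finset.mem_erase.2 ⟨hanch.1, hu⟩))
      · exact Finset.mem_insert_of_mem (Finset.mem_insert_of_mem
          (Finset.mem_erase.2 ⟨hanch.2, hw⟩))
      · have := ih (insert p.1 S) hrest (Finset.mem_insert_of_mem hv1)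
          (fun q hq => hcond q (List.mem_cons_of_mem p hq))
        have hset : insert u1 (insert u2 ((insert p.1 S).erase v1)) =
            insert p.1 (insert u1 (insert u2 (S.erase v1))) := by
          rw [Finset.erase_insert_of_ne hpne]
          ext x
          simp only [Finset.mem_insert]
          tauto
        rwa [hset] at this

end Helpers

/-- If `u1` and `u2` are the only vertices constructed directly on the base
pair `(v1, v2)` and `v1` has degree 2, then `G \ {v1}` is a simple 1-dof Henneberg-I graph
with base non-edge `(u1, u2)`. -/
theorem stmt12 (v1 v2 : α) (hab : v1 ≠ v2) (l : List (α × α × α))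
    (hl : ValidFrom {v1, v2} l)
    (V : Finset α) (E : Finset (Sym2 α))
    (hV : V = buildVerts v1 v2 l) (hE : E = (buildEdges v1 v2 l).erase s(v1, v2))
    (u1 u2 : α) (hu : u1 ≠ u2)
    (hu1 : ∃ p ∈ l, p.1 = u1 ∧ OnBase v1 v2 p)
    (hu2 : ∃ p ∈ l, p.1 = u2 ∧ OnBase v1 v2 p)
    (honly : ∀ p ∈ l, OnBase v1 v2 p → p.1 = u1 ∨ p.1 = u2)
    (hdeg : degreeIn E v1 = 2) :
    IsSimple1Dof (V.erase v1) (E.filter (fun e => v1 ∉ e)) u1 u2 := by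
  subst hV hE
  obtain ⟨q1, hq1l, hq1a, hq1b⟩ := hu1
  obtain ⟨q2, hq2l, hq2a, hq2b⟩ := hu2
  have hfst : ∀ p ∈ l, p.1 ≠ v1 ∧ p.1 ≠ v2 := by
    intro p hp
    have := valid_notMem l {v1, v2} hl p hp
    simp only [Finset.mem_insert, Finset.mem_singleton] at this
    exact ⟨fun h => this (Or.inl h), fun h => this (Or.inr h)⟩
  have hu1v1 : u1 ≠ v1 := hq1a ▸ (hfst q1 hq1l).1
  have hu1v2 : u1 ≠ v2 := hq1a ▸ (hfst q1 hq1l).2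
  have hu2v1 : u2 ≠ v1 := hq2a ▸ (hfst q2 hq2l).1
  have hu2v2 : u2 ≠ v2 := hq2a ▸ (hfst q2 hq2l).2
  have hpw := valid_pairwise l {v1, v2} hl
  have huniq : ∀ p ∈ l, ∀ q ∈ l, p.1 = q.1 → p = q := by
    intro p hp q hq h
    by_contra hne
    have hsym : Symmetric (fun p q : α × α × α => p.1 ≠ q.1) := fun a b h h' => h h'.symm
    haveI : Std.Symm (fun p q : α × α × α => p.1 ≠ q.1) := ⟨hsym⟩
    exact hpw.forall hp hq hne h
  have hOn : ∀ p ∈ l, p.1 = u1 ∨ p.1 = u2 → OnBase v1 v2 p := by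
    intro p hp h
    rcases h with h | h
    · rw [huniq p hp q1 hq1l (h.trans hq1a.symm)]; exact hq1b
    · rw [huniq p hp q2 hq2l (h.trans hq2a.symm)]; exact hq2b
  have hedge : ∀ p ∈ l, OnBase v1 v2 p →
      s(p.1, v1) ∈ buildEdges v1 v2 l ∧ s(p.1, v2) ∈ buildEdges v1 v2 l := by
    intro p hp hb
    rcases hb with ⟨h1, h2⟩ | ⟨h1, h2⟩
    · exact ⟨(mem_buildEdges _ _ _ _).2 (Or.inr ⟨p, hp, Or.inl (by rw [h1])⟩),
        (mem_buildEdges _ _ _ _).2 (Or.inr ⟨p, hp, Or.inr (by rw [h2])⟩)⟩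
    · exact ⟨(mem_buildEdges _ _ _ _).2 (Or.inr ⟨p, hp, Or.inr (by rw [h2])⟩),
        (mem_buildEdges _ _ _ _).2 (Or.inr ⟨p, hp, Or.inl (by rw [h1])⟩)⟩
  have hinE : ∀ p ∈ l, OnBase v1 v2 p →
      s(p.1, v1) ∈ (buildEdges v1 v2 l).erase s(v1, v2) := by
    intro p hp hb
    refine Finset.mem_erase.2 ⟨?_, (hedge p hp hb).1⟩
    intro h
    rw [Sym2.eq_iff] at h
    rcases h with ⟨h1, -⟩ | ⟨h1, -⟩
    · exact (hfst p hp).1 h1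
    · exact (hfst p hp).2 h1
  have h4 : ∀ p ∈ l, (p.2.1 = v1 ∨ p.2.2 = v1) → p.1 = u1 ∨ p.1 = u2 := by
    intro p hp hanch
    by_contra hc
    push_neg at hc
    have hein : s(p.1, v1) ∈ (buildEdges v1 v2 l).erase s(v1, v2) := by
      refine Finset.mem_erase.2 ⟨?_, (mem_buildEdges _ _ _ _).2
        (Or.inr ⟨p, hp, hanch.imp (fun h => by rw [h]) (fun h => by rw [h])⟩)⟩
      intro h
      rw [Sym2.eq_iff] at h
      rcases h with ⟨h1, -⟩ | ⟨h1, -⟩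
      · exact (hfst p hp).1 h1
      · exact (hfst p hp).2 h1
    have he1 : s(u1, v1) ∈ (buildEdges v1 v2 l).erase s(v1, v2) := hq1a ▸ hinE q1 hq1l hq1b
    have he2 : s(u2, v1) ∈ (buildEdges v1 v2 l).erase s(v1, v2) := hq2a ▸ hinE q2 hq2l hq2b
    have hsub : ({s(u1, v1), s(u2, v1), s(p.1, v1)} : Finset (Sym2 α)) ⊆
        ((buildEdges v1 v2 l).erase s(v1, v2)).filter (fun e => v1 ∈ e) := by
      intro e he
      simp only [Finset.mem_insert, Finset.mem_singleton] at he
      rcases he with rfl | rfl | rfl <;>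
        exact Finset.mem_filter.2 ⟨by assumption, by simp⟩
    have hc3 : ({s(u1, v1), s(u2, v1), s(p.1, v1)} : Finset (Sym2 α)).card = 3 := by
      have d12 : s(u1, v1) ≠ s(u2, v1) := fun h => by
        rw [Sym2.eq_iff] at h
        rcases h with ⟨h, -⟩ | ⟨h, -⟩
        · exact hu h
        · exact hu1v1 h
      have d13 : s(u1, v1) ≠ s(p.1, v1) := fun h => by
        rw [Sym2.eq_iff] at h
        rcases h with ⟨h, -⟩ | ⟨h, -⟩
        · exact hc.1 h.symm
        · exact hu1v1 h
      have d23 : s(u2, v1) ≠ s(p.1, v1) := fun h => by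
        rw [Sym2.eq_iff] at h
        rcases h with ⟨h, -⟩ | ⟨h, -⟩
        · exact hc.2 h.symm
        · exact hu2v1 h
      rw [Finset.card_insert_of_notMem (by simp [d12, d13]),
        Finset.card_insert_of_notMem (by simp [d23]), Finset.card_singleton]
    have hle := Finset.card_le_card hsub
    rw [hc3] at hle
    rw [degreeIn] at hdeg
    omega
  have hnotin : s(u1, u2) ∉ buildEdges v1 v2 l := by
    rw [mem_buildEdges]
    rintro (h | ⟨p, hp, h⟩)
    · rw [Sym2.eq_iff] at h
      rcases h with ⟨h1, -⟩ | ⟨h1, -⟩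
      · exact hu1v1 h1
      · exact hu1v2 h1
    · have hcase : (p.1 = u1 ∧ (p.2.1 = u2 ∨ p.2.2 = u2)) ∨
          (p.1 = u2 ∧ (p.2.1 = u1 ∨ p.2.2 = u1)) := by
        rcases h with h | h <;> rw [Sym2.eq_iff] at h <;>
          rcases h with ⟨h1, h2⟩ | ⟨h1, h2⟩ <;> tauto
      rcases hcase with ⟨h1, h2⟩ | ⟨h1, h2⟩
      · have hb := hOn p hp (Or.inl h1)
        rcases hb with ⟨hx, hy⟩ | ⟨hx, hy⟩ <;> rcases h2 with h2 | h2
        · exact hu2v1 (h2 ▸ hx)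
        · exact hu2v2 (h2 ▸ hy)
        · exact hu2v2 (h2 ▸ hx)
        · exact hu2v1 (h2 ▸ hy)
      · have hb := hOn p hp (Or.inr h1)
        rcases hb with ⟨hx, hy⟩ | ⟨hx, hy⟩ <;> rcases h2 with h2 | h2
        · exact hu1v1 (h2 ▸ hx)
        · exact hu1v2 (h2 ▸ hy)
        · exact hu1v2 (h2 ▸ hx)
        · exact hu1v1 (h2 ▸ hy)
  set lf := l.filter (fun p => p.1 ≠ u1 ∧ p.1 ≠ u2) with hlf
  have hmemlf : ∀ p, p ∈ lf ↔ p ∈ l ∧ p.1 ≠ u1 ∧ p.1 ≠ u2 := by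
    intro p
    rw [hlf, List.mem_filter]
    simp
  have hvalid : ValidFrom {u1, u2} ((v2, u1, u2) :: lf) := by
    rw [validFrom_cons]
    refine ⟨?_, by simp, by simp, hu, ?_⟩
    · simp only [Finset.mem_insert, Finset.mem_singleton]
      rintro (h | h)
      · exact hu1v2 h.symm
      · exact hu2v2 h.symm
    · have hA := validA v1 u1 u2 l {v1, v2} hl (by simp) h4
      have hset : insert u1 (insert u2 (({v1, v2} : Finset α).erase v1)) =
          insert v2 ({u1, u2} : Finset α) := by
        have : ({v1, v2} : Finset α).erase v1 = {v2} := by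
          rw [show ({v1, v2} : Finset α) = insert v1 {v2} from rfl,
            Finset.erase_insert (by simpa using hab)]
        rw [this]
        ext x
        simp only [Finset.mem_insert, Finset.mem_singleton]
        tauto
      rwa [hset] at hA
  have hverts : (buildVerts v1 v2 l).erase v1 = buildVerts u1 u2 ((v2, u1, u2) :: lf) := by
    ext x
    simp only [Finset.mem_erase, mem_buildVerts, List.mem_cons]
    constructor
    · rintro ⟨hx, (h | h | ⟨p, hp, rfl⟩)⟩
      · exact absurd h hx
      · exact Or.inr (Or.inr ⟨(v2, u1, u2), Or.inl rfl, h.symm⟩)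
      · by_cases h : p.1 = u1 ∨ p.1 = u2
        · rcases h with h | h
          · exact Or.inl h
          · exact Or.inr (Or.inl h)
        · push_neg at h
          exact Or.inr (Or.inr ⟨p, Or.inr ((hmemlf p).2 ⟨hp, h⟩), rfl⟩)
    · rintro (rfl | rfl | ⟨p, (rfl | hp), rfl⟩)
      · exact ⟨hu1v1, Or.inr (Or.inr ⟨q1, hq1l, hq1a⟩)⟩
      · exact ⟨hu2v1, Or.inr (Or.inr ⟨q2, hq2l, hq2a⟩)⟩
      · exact ⟨Ne.symm hab, Or.inr (Or.inl rfl)⟩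
      · have hp' := ((hmemlf p).1 hp).1
        exact ⟨(hfst p hp').1, Or.inr (Or.inr ⟨p, hp', rfl⟩)⟩
  have hedges : insert s(u1, u2) (((buildEdges v1 v2 l).erase s(v1, v2)).filter
      (fun e => v1 ∉ e)) = buildEdges u1 u2 ((v2, u1, u2) :: lf) := by
    have hq1e : s(u1, v2) ∈ buildEdges v1 v2 l := hq1a ▸ (hedge q1 hq1l hq1b).2
    have hq2e : s(u2, v2) ∈ buildEdges v1 v2 l := hq2a ▸ (hedge q2 hq2l hq2b).2
    ext e
    simp only [Finset.mem_insert, Finset.mem_filter, Finset.mem_erase, mem_buildEdges,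
      List.mem_cons]
    constructor
    · rintro (rfl | ⟨⟨hne, (rfl | ⟨p, hp, hcase⟩)⟩, hv1e⟩)
      · exact Or.inl rfl
      · exact absurd (by simp) hv1e
      · by_cases hp1 : p.1 = u1 ∨ p.1 = u2
        · have hb := hOn p hp hp1
          have he2 : e = s(p.1, v2) := by
            rcases hb with ⟨h1, h2⟩ | ⟨h1, h2⟩ <;> rcases hcase with rfl | rfl
            · exact absurd (by rw [h1]; simp) hv1e
            · rw [h2]
            · rw [h1]
            · exact absurd (by rw [h2]; simp) hv1e
          rcases hp1 with h | h
          · exact Or.inr ⟨(v2, u1, u2), Or.inl rfl,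
              Or.inl (by rw [he2, h]; exact Sym2.eq_swap)⟩
          · exact Or.inr ⟨(v2, u1, u2), Or.inl rfl,
              Or.inr (by rw [he2, h]; exact Sym2.eq_swap)⟩
        · push_neg at hp1
          exact Or.inr ⟨p, Or.inr ((hmemlf p).2 ⟨hp, hp1⟩), hcase⟩
    · rintro (rfl | ⟨p, (rfl | hp), hcase⟩)
      · exact Or.inl rfl
      · rcases hcase with rfl | rfl
        · refine Or.inr ⟨⟨?_, Or.inr ⟨q1, hq1l, ?_⟩⟩, ?_⟩
          · intro h
            rw [Sym2.eq_iff] at h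
            rcases h with ⟨h1, -⟩ | ⟨-, h1⟩
            · exact hab h1.symm
            · exact hu1v1 h1
          · rcases hq1b with ⟨h1, h2⟩ | ⟨h1, h2⟩
            · exact Or.inr (by rw [h2, hq1a]; exact Sym2.eq_swap)
            · exact Or.inl (by rw [h1, hq1a]; exact Sym2.eq_swap)
          · simp only [Sym2.mem_iff]
            rintro (h | h)
            · exact hab h
            · exact hu1v1 h.symm
        · refine Or.inr ⟨⟨?_, Or.inr ⟨q2, hq2l, ?_⟩⟩, ?_⟩
          · intro h
            rw [Sym2.eq_iff] at h
            rcases h with ⟨h1, -⟩ | ⟨-, h1⟩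
            · exact hab h1.symm
            · exact hu2v1 h1
          · rcases hq2b with ⟨h1, h2⟩ | ⟨h1, h2⟩
            · exact Or.inr (by rw [h2, hq2a]; exact Sym2.eq_swap)
            · exact Or.inl (by rw [h1, hq2a]; exact Sym2.eq_swap)
          · simp only [Sym2.mem_iff]
            rintro (h | h)
            · exact hab h
            · exact hu2v1 h.symm
      · have hpl := (hmemlf p).1 hp
        have hnv1 : p.2.1 ≠ v1 ∧ p.2.2 ≠ v1 := by
          constructor <;> intro h
          · rcases h4 p hpl.1 (Or.inl h) with h' | h'
            · exact hpl.2.1 h'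
            · exact hpl.2.2 h'
          · rcases h4 p hpl.1 (Or.inr h) with h' | h'
            · exact hpl.2.1 h'
            · exact hpl.2.2 h'
        have hv1e : v1 ∉ e := by
          rcases hcase with rfl | rfl <;> simp only [Sym2.mem_iff] <;> rintro (h | h)
          · exact (hfst p hpl.1).1 h.symm
          · exact hnv1.1 h.symm
          · exact (hfst p hpl.1).1 h.symm
          · exact hnv1.2 h.symm
        refine Or.inr ⟨⟨fun h => hv1e (by rw [h]; simp), Or.inr ⟨p, hpl.1, hcase⟩⟩, hv1e⟩
  exact ⟨fun h => hnotin (Finset.mem_of_mem_erase (Finset.mem_filter.1 h).1), hu,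
    (v2, u1, u2) :: lf, hvalid, hverts, hedges⟩
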